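/- arXiv:2403.02670 — 4 statements merged into one kernel-verified Lean document; each statement's English description precedes it below -/
import Mathlib

section
/- Let U_1,...,U_n be independent uniform random variables on [0,1] and S_n their sum. Then for every integer k ≥ 0, P(⌊S_n⌋ = k) = A(n,k)/n!, where A(n,k) is the Eulerian number. -/
open MeasureTheory ProbabilityTheory Finset
open scoped ENNReal

/-- The set of descents of a permutation of `Fin n`. -/
def descentSet {n : ℕ} (σ : Equiv.Perm (Fin n)) : Finset (Fin n) :=
  Finset.univ.filter (fun i => ∃ h : (i : ℕ) + 1 < n, σ ⟨(i : ℕ) + 1, h⟩ < σ i)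

/-- The Eulerian number `A(n,k)`: permutations of length `n` with exactly `k` descents. -/
def eulerian (n k : ℕ) : ℕ :=
  (Finset.univ.filter (fun σ : Equiv.Perm (Fin n) => (descentSet σ).card = k)).card

noncomputable section FloorSumAux

namespace FloorSumAux

instance fact01 : Fact ((0:ℝ) < 1) := ⟨one_pos⟩

/-- The uniform measure on `[0,1]`. -/
def unif : Measure ℝ := volume.restrict (Set.Icc 0 1)

/-- The uniform measure on `(0,1]`. -/
def unifI : Measure ℝ := volume.restrict (Set.Ioc 0 1)

lemma unif_eq_unifI : unif = unifI :=
  (Measure.restrict_congr_set Ioc_ae_eq_Icc).symm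

instance : IsProbabilityMeasure unif := by
  constructor
  simp [unif, Real.volume_Icc]

instance : IsProbabilityMeasure unifI := by
  rw [← unif_eq_unifI]; infer_instance

variable {n : ℕ}

lemma Iic_mk_zero (h0 : 0 < n) : Finset.Iic (⟨0, h0⟩ : Fin n) = {⟨0, h0⟩} := by
  ext j
  simp [Finset.mem_Iic, Fin.le_def, Fin.ext_iff, Nat.le_zero]

lemma Iic_mk_succ (m : ℕ) (h : m + 1 < n) :
    Finset.Iic (⟨m + 1, h⟩ : Fin n) = insert ⟨m + 1, h⟩ (Finset.Iic ⟨m, by omega⟩) := by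
  ext j
  simp only [Finset.mem_Iic, Finset.mem_insert, Fin.le_def, Fin.ext_iff]
  omega

lemma Iic_mk_last (h0 : 0 < n) : Finset.Iic (⟨n - 1, by omega⟩ : Fin n) = Finset.univ := by
  ext j
  simp only [Finset.mem_Iic, Finset.mem_univ, iff_true, Fin.le_def]
  omega

/-- partial sums of a tuple -/
def ps {M : Type*} [AddCommMonoid M] (x : Fin n → M) (i : Fin n) : M :=
  ∑ j ∈ Finset.Iic i, x j

lemma ps_zero {M : Type*} [AddCommMonoid M] (x : Fin n → M) (h0 : 0 < n) :
    ps x ⟨0, h0⟩ = x ⟨0, h0⟩ := by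
  rw [ps, Iic_mk_zero, Finset.sum_singleton]

lemma ps_succ {M : Type*} [AddCommMonoid M] (x : Fin n → M) (m : ℕ) (h : m + 1 < n) :
    ps x ⟨m + 1, h⟩ = ps x ⟨m, by omega⟩ + x ⟨m + 1, h⟩ := by
  rw [ps, Iic_mk_succ, Finset.sum_insert, add_comm, ps]
  simp [Finset.mem_Iic, Fin.le_def]

/-- number of descents of a word -/
def desCount (w : Fin n → ℝ) : ℕ :=
  (Finset.univ.filter fun i : Fin n =>
    ∃ h : (i : ℕ) + 1 < n, w ⟨(i : ℕ) + 1, h⟩ < w i).card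

lemma measurable_desCount {α : Type*} [MeasurableSpace α] {w : α → Fin n → ℝ}
    (hw : ∀ i, Measurable fun a => w a i) : Measurable fun a => desCount (w a) := by
  unfold desCount
  simp_rw [Finset.card_filter]
  refine Finset.measurable_sum _ fun i _ => ?_
  by_cases h : (i : ℕ) + 1 < n
  · have heq : ∀ a, (∃ hh : (i : ℕ) + 1 < n, w a ⟨(i : ℕ) + 1, hh⟩ < w a i) ↔
        w a ⟨(i : ℕ) + 1, h⟩ < w a i := fun a => ⟨fun ⟨_, hq⟩ => hq, fun hq => ⟨h, hq⟩⟩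
    simp only [heq]
    exact Measurable.ite (measurableSet_lt (hw _) (hw _)) measurable_const measurable_const
  · simp only [h, IsEmpty.exists_iff, if_false]
    exact measurable_const

/-- The canonical representative of a point on the unit circle, in `[0,1)`. -/
def circleRep : AddCircle (1 : ℝ) → ℝ :=
  fun a => ((AddCircle.measurableEquivIco 1 0 a : Set.Ico (0:ℝ) (0 + 1)) : ℝ)

lemma measurable_circleRep : Measurable circleRep :=
  measurable_subtype_coe.comp (AddCircle.measurableEquivIco 1 0).measurable

lemma circleRep_coe (t : ℝ) : circleRep (t : AddCircle (1:ℝ)) = Int.fract t := by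
  have h := AddCircle.coe_equivIco_mk_apply (p := (1:ℝ)) t
  simp only [div_one, mul_one] at h
  exact h

lemma coe_sum_addCircle {ι : Type*} (s : Finset ι) (f : ι → ℝ) :
    ((∑ i ∈ s, f i : ℝ) : AddCircle (1:ℝ)) = ∑ i ∈ s, (f i : AddCircle (1:ℝ)) := by
  rw [show ((↑) : ℝ → AddCircle (1:ℝ)) =
      (QuotientAddGroup.mk' (AddSubgroup.zmultiples (1:ℝ))) from rfl]
  rw [map_sum]

/-- partial sum as an additive monoid hom on the torus -/
def psHom : (Fin n → AddCircle (1:ℝ)) →+ (Fin n → AddCircle (1:ℝ)) where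
  toFun := ps
  map_zero' := by funext i; simp [ps]
  map_add' := fun a b => by funext i; simp [ps, Finset.sum_add_distrib]

lemma psHom_apply (y : Fin n → AddCircle (1:ℝ)) (i : Fin n) :
    psHom y i = ∑ j ∈ Finset.Iic i, y j := rfl

lemma continuous_psHom : Continuous (psHom (n := n)) := by
  refine continuous_pi fun i => ?_
  simpa [psHom, ps] using
    continuous_finset_sum (Finset.Iic i) (fun j _ => continuous_apply (A := fun _ => AddCircle (1:ℝ)) j)

lemma surjective_psHom : Function.Surjective (psHom (n := n)) := by
  intro z
  refine ⟨fun i => z i - (if h : (i : ℕ) = 0 then 0 else z ⟨(i : ℕ) - 1, by omega⟩), ?_⟩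
  set x : Fin n → AddCircle (1:ℝ) :=
    fun i => z i - (if h : (i : ℕ) = 0 then 0 else z ⟨(i : ℕ) - 1, by omega⟩) with hx
  have key : ∀ m (hm : m < n), ps x ⟨m, hm⟩ = z ⟨m, hm⟩ := by
    intro m
    induction m with
    | zero =>
      intro hm
      rw [ps_zero, hx]
      simp
    | succ m ih =>
      intro hm
      rw [ps_succ _ m hm, ih (by omega), hx]
      simp only [dif_neg (Nat.succ_ne_zero m), Nat.add_sub_cancel]
      abel
  funext i
  obtain ⟨iv, hiv⟩ := i
  exact key iv hiv

lemma measurePreserving_psHom :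
    MeasurePreserving (psHom (n := n))
      (Measure.pi fun _ => (volume : Measure (AddCircle (1:ℝ))))
      (Measure.pi fun _ => (volume : Measure (AddCircle (1:ℝ)))) :=
  AddMonoidHom.measurePreserving continuous_psHom surjective_psHom rfl

lemma measurePreserving_mkPi :
    MeasurePreserving (fun (x : Fin n → ℝ) (i : Fin n) => ((x i : AddCircle (1:ℝ))))
      (Measure.pi fun _ => unifI) (Measure.pi fun _ => (volume : Measure (AddCircle (1:ℝ)))) := by
  refine measurePreserving_pi _ _ fun i => ?_
  have := AddCircle.measurePreserving_mk (1:ℝ) 0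
  simpa [unifI] using this

lemma pi_eval_mem {m : ℕ} (μ : Measure ℝ) [IsProbabilityMeasure μ] (j : Fin m) (B : Set ℝ) :
    Measure.pi (fun _ : Fin m => μ) {x | x j ∈ B} = μ B := by
  have hset : {x : Fin m → ℝ | x j ∈ B} =
      Set.pi Set.univ (Function.update (fun _ => Set.univ) j B) := by
    ext x
    simp only [Set.mem_setOf_eq, Set.mem_pi, Set.mem_univ, forall_true_left]
    constructor
    · intro hx i
      rcases eq_or_ne i j with rfl | hij
      · simpa using hx
      · simp [Function.update_apply, hij]
    · intro hx
      have := hx j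
      simpa using this
  rw [hset, Measure.pi_pi]
  rw [Fintype.prod_eq_single j (fun i hij => by simp [Function.update_apply, hij])]
  simp

lemma unif_singleton (a : ℝ) : unif ({a} : Set ℝ) = 0 := by
  rw [unif, Measure.restrict_apply (measurableSet_singleton a)]
  exact measure_mono_null Set.inter_subset_left Real.volume_singleton

lemma pi_eval_eq_eval {m : ℕ} {i j : Fin m} (hij : i ≠ j) :
    Measure.pi (fun _ : Fin m => unif) {x | x i = x j} = 0 := by
  cases m with
  | zero => exact i.elim0
  | succ m =>
    obtain ⟨j', hj'⟩ := Fin.exists_succAbove_eq (Ne.symm hij)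
    set e := MeasurableEquiv.piFinSuccAbove (fun _ : Fin (m+1) => ℝ) i with he
    have hmp := measurePreserving_piFinSuccAbove (fun _ : Fin (m+1) => unif) i
    have hS : MeasurableSet {p : ℝ × (Fin m → ℝ) | p.1 = p.2 j'} :=
      measurableSet_eq_fun measurable_fst ((measurable_pi_apply j').comp measurable_snd)
    have hpre : e ⁻¹' {p : ℝ × (Fin m → ℝ) | p.1 = p.2 j'} = {x | x i = x j} := by
      ext x
      simp only [Set.mem_preimage, Set.mem_setOf_eq, he,
        MeasurableEquiv.piFinSuccAbove_apply, Fin.removeNth, hj',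
        Fin.insertNthEquiv_symm_apply]
    rw [← hpre, hmp.measure_preimage hS.nullMeasurableSet, Measure.prod_apply hS]
    have hz : ∀ a : ℝ,
        (Measure.pi fun _ : Fin m => unif)
          (Prod.mk a ⁻¹' {p : ℝ × (Fin m → ℝ) | p.1 = p.2 j'}) = 0 := by
      intro a
      have hseq : (Prod.mk a ⁻¹' {p : ℝ × (Fin m → ℝ) | p.1 = p.2 j'})
          = {y : Fin m → ℝ | y j' ∈ ({a} : Set ℝ)} := by
        ext y
        simp [eq_comm]
      rw [hseq, pi_eval_mem, unif_singleton]
    simp only [hz, lintegral_zero]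

/-- The deterministic key lemma: for a tuple with entries in `(0,1)`, the floor of the sum
is the number of descents of the word of fractional parts of partial sums. -/
lemma floor_sum_eq_desCount (x : Fin n → ℝ) (hx : ∀ i, x i ∈ Set.Ioo (0:ℝ) 1) :
    ⌊∑ i, x i⌋ = (desCount (fun i => Int.fract (ps x i)) : ℤ) := by
  classical
  rcases Nat.eq_zero_or_pos n with hn | hn
  · subst hn
    simp [desCount]
  set w : Fin n → ℝ := fun i => Int.fract (ps x i) with hw
  set D : Fin n → Prop := fun i => ∃ h : (i:ℕ)+1 < n, w ⟨(i:ℕ)+1, h⟩ < w i with hD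
  have key : ∀ m (hm : m < n),
      ⌊ps x ⟨m, hm⟩⌋ =
        ((Finset.univ.filter fun i : Fin n => ((i:ℕ) < m ∧ D i)).card : ℤ) := by
    intro m
    induction m with
    | zero =>
      intro hm
      rw [ps_zero]
      rw [Int.floor_eq_zero_iff.mpr ⟨le_of_lt (hx _).1, (hx _).2⟩]
      simp
    | succ m ih =>
      intro hm
      have hm' : m < n := by omega
      rw [ps_succ _ m hm]
      set a := ps x ⟨m, hm'⟩ with ha
      set t := x ⟨m+1, hm⟩ with ht
      have ht0 : 0 < t := (hx _).1
      have ht1 : t < 1 := (hx _).2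
      have hfr0 : 0 ≤ Int.fract a := Int.fract_nonneg a
      have hfr1 : Int.fract a < 1 := Int.fract_lt_one a
      have hsplit : a + t = (⌊a⌋ : ℝ) + (Int.fract a + t) := by
        rw [← add_assoc, Int.floor_add_fract]
      have hfloor : ⌊a + t⌋ = ⌊a⌋ + ⌊Int.fract a + t⌋ := by
        rw [hsplit, Int.floor_intCast_add]
      have hfract : Int.fract (a + t) = Int.fract (Int.fract a + t) := by
        rw [hsplit, Int.fract_intCast_add]
      have hwm : w ⟨m, hm'⟩ = Int.fract a := by rw [hw]
      have hwm1 : w ⟨m+1, hm⟩ = Int.fract (a + t) := by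
        rw [hw]
        simp only [ha, ht]
        rw [← ps_succ x m hm]
      -- split the counting set
      have hsplitset : (Finset.univ.filter fun i : Fin n => ((i:ℕ) < m+1 ∧ D i))
          = (Finset.univ.filter fun i : Fin n => ((i:ℕ) < m ∧ D i)) ∪
            (Finset.univ.filter fun i : Fin n => ((i:ℕ) = m ∧ D i)) := by
        rw [← Finset.filter_or]
        apply Finset.filter_congr
        intro i _
        constructor
        · rintro ⟨h1, h2⟩
          rcases Nat.lt_succ_iff_lt_or_eq.mp h1 with h | h
          · exact Or.inl ⟨h, h2⟩
          · exact Or.inr ⟨h, h2⟩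
        · rintro (⟨h1, h2⟩ | ⟨h1, h2⟩)
          · exact ⟨by omega, h2⟩
          · exact ⟨by omega, h2⟩
      have hdisj : Disjoint
          (Finset.univ.filter fun i : Fin n => ((i:ℕ) < m ∧ D i))
          (Finset.univ.filter fun i : Fin n => ((i:ℕ) = m ∧ D i)) := by
        rw [Finset.disjoint_left]
        intro i hi1 hi2
        rw [Finset.mem_filter] at hi1 hi2
        omega
      have hmemD : ∀ i : Fin n, ((i:ℕ) = m ∧ D i) ↔ (i = ⟨m, hm'⟩ ∧ D ⟨m, hm'⟩) := by
        intro i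
        constructor
        · rintro ⟨h1, h2⟩
          have : i = ⟨m, hm'⟩ := Fin.ext h1
          exact ⟨this, this ▸ h2⟩
        · rintro ⟨h1, h2⟩
          exact ⟨by rw [h1], h1 ▸ h2⟩
      have hDm : D ⟨m, hm'⟩ ↔ w ⟨m+1, hm⟩ < w ⟨m, hm'⟩ := by
        rw [hD]
        exact ⟨fun ⟨_, hq⟩ => hq, fun hq => ⟨hm, hq⟩⟩
      by_cases hc : Int.fract a + t < 1
      · -- no carry, no descent
        have hfl0 : ⌊Int.fract a + t⌋ = 0 :=
          Int.floor_eq_zero_iff.mpr ⟨by linarith, hc⟩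
        have hfe : Int.fract (Int.fract a + t) = Int.fract a + t :=
          Int.fract_eq_self.mpr ⟨by linarith, hc⟩
        have hnodesc : ¬ D ⟨m, hm'⟩ := by
          rw [hDm, hwm1, hwm, hfract, hfe]
          push_neg
          linarith
        have : (Finset.univ.filter fun i : Fin n => ((i:ℕ) = m ∧ D i)) = ∅ := by
          rw [Finset.filter_eq_empty_iff]
          intro i _
          rw [hmemD]
          rintro ⟨_, h2⟩
          exact hnodesc h2
        rw [hsplitset, Finset.card_union_of_disjoint hdisj, this, hfloor, hfl0, ih hm']
        simp
      · -- carry, descent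
        push_neg at hc
        have hfl1 : ⌊Int.fract a + t⌋ = 1 := by
          rw [Int.floor_eq_iff]
          constructor
          · simpa using hc
          · push_cast
            linarith
        have hfe : Int.fract (Int.fract a + t) = Int.fract a + t - 1 := by
          have h1 : Int.fract (Int.fract a + t) = Int.fract (Int.fract a + t - (1:ℤ)) := by
            rw [Int.fract_sub_intCast]
          rw [h1]
          push_cast
          exact Int.fract_eq_self.mpr ⟨by linarith, by linarith⟩
        have hdesc : D ⟨m, hm'⟩ := by
          rw [hDm, hwm1, hwm, hfract, hfe]
          linarith
        have : (Finset.univ.filter fun i : Fin n => ((i:ℕ) = m ∧ D i))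
            = {(⟨m, hm'⟩ : Fin n)} := by
          apply Finset.eq_singleton_iff_unique_mem.mpr
          constructor
          · rw [Finset.mem_filter]
            exact ⟨Finset.mem_univ _, rfl, hdesc⟩
          · intro i hi
            rw [Finset.mem_filter, hmemD] at hi
            exact hi.2.1
        rw [hsplitset, Finset.card_union_of_disjoint hdisj, this, hfloor, hfl1, ih hm']
        simp only [Finset.card_singleton]
        push_cast
        ring
  have hsum : ∑ i, x i = ps x ⟨n-1, by omega⟩ := by
    rw [ps, Iic_mk_last hn]
  rw [hsum, key (n-1) (by omega)]
  congr 1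
  unfold desCount
  congr 1
  apply Finset.filter_congr
  intro i _
  constructor
  · rintro ⟨_, h2⟩
    exact h2
  · rintro ⟨h, hq⟩
    exact ⟨by omega, h, hq⟩

/-- region where `x ∘ σ` is strictly monotone -/
def region (σ : Equiv.Perm (Fin n)) : Set (Fin n → ℝ) :=
  {x | StrictMono (x ∘ σ)}

lemma measurableSet_region (σ : Equiv.Perm (Fin n)) : MeasurableSet (region σ) := by
  have : region σ = ⋂ (i : Fin n) (j : Fin n) (_ : i < j),
      {x : Fin n → ℝ | x (σ i) < x (σ j)} := by
    ext x
    constructor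
    · intro hx
      simp only [Set.mem_iInter, Set.mem_setOf_eq]
      intro i j hij
      exact hx hij
    · intro hx
      intro i j hij
      simp only [Set.mem_iInter, Set.mem_setOf_eq] at hx
      exact hx i j hij
  rw [this]
  exact MeasurableSet.iInter fun i => MeasurableSet.iInter fun j => MeasurableSet.iInter fun _ =>
    measurableSet_lt (measurable_pi_apply _) (measurable_pi_apply _)

lemma injective_of_mem_region {σ : Equiv.Perm (Fin n)} {x : Fin n → ℝ}
    (hx : x ∈ region σ) : Function.Injective x := by
  have : x = (x ∘ σ) ∘ σ.symm := by
    funext i; simp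
  rw [this]
  exact hx.injective.comp σ.symm.injective

lemma region_disjoint {σ τ : Equiv.Perm (Fin n)} (hστ : σ ≠ τ) :
    Disjoint (region σ) (region τ) := by
  rw [Set.disjoint_left]
  intro x hxσ hxτ
  apply hστ
  have hinj : Function.Injective x := injective_of_mem_region hxσ
  have hr : Set.range (x ∘ σ) = Set.range (x ∘ τ) := by
    rw [Set.range_comp, Set.range_comp, σ.range_eq_univ, τ.range_eq_univ]
  haveI : WellFoundedLT (Fin n) := inferInstance
  have h3 : (x ∘ σ) = (x ∘ τ) :=
    (StrictMono.range_inj (β := Fin n) (γ := ℝ) hxσ hxτ).mp hr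
  exact Equiv.ext fun i => hinj (congrFun h3 i)

lemma mem_region_sort {x : Fin n → ℝ} (hx : Function.Injective x) :
    x ∈ region (Tuple.sort x) := by
  have hmono := Tuple.monotone_sort x
  exact hmono.strictMono_of_injective (hx.comp (Tuple.sort x).injective)

lemma measurePreserving_comp_perm (σ : Equiv.Perm (Fin n)) :
    MeasurePreserving (fun x : Fin n → ℝ => x ∘ σ)
      (Measure.pi fun _ => unif) (Measure.pi fun _ => unif) := by
  have hmeas : Measurable fun x : Fin n → ℝ => x ∘ σ :=
    measurable_pi_lambda _ fun i => measurable_pi_apply (σ i)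
  refine ⟨hmeas, ?_⟩
  refine (Measure.pi_eq fun s hs => ?_).symm
  rw [Measure.map_apply hmeas (MeasurableSet.univ_pi hs)]
  have hpre : (fun x : Fin n → ℝ => x ∘ σ) ⁻¹' Set.pi Set.univ s
      = Set.pi Set.univ (fun j => s (σ.symm j)) := by
    ext x
    simp only [Set.mem_preimage, Set.mem_pi, Set.mem_univ, forall_true_left,
      Function.comp_apply]
    constructor
    · intro h j
      have := h (σ.symm j)
      simpa using this
    · intro h i
      have := h (σ i)
      simpa using this
  rw [hpre, Measure.pi_pi]
  exact Equiv.prod_comp σ.symm (fun j => unif (s j))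

lemma pi_region_eq (σ : Equiv.Perm (Fin n)) :
    Measure.pi (fun _ : Fin n => unif) (region σ)
      = Measure.pi (fun _ : Fin n => unif) (region 1) := by
  have h := measurePreserving_comp_perm σ
  have hpre : (fun x : Fin n → ℝ => x ∘ σ) ⁻¹' region 1 = region σ := by
    ext x
    simp only [Set.mem_preimage, region, Set.mem_setOf_eq, Equiv.Perm.coe_one,
      Function.comp_id, Function.comp_def, id_eq]
  rw [← hpre, h.measure_preimage (measurableSet_region 1).nullMeasurableSet]

lemma desCount_eq_of_mem_region {σ : Equiv.Perm (Fin n)} {x : Fin n → ℝ}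
    (hx : x ∈ region σ) : desCount x = (descentSet σ⁻¹).card := by
  unfold desCount descentSet
  congr 1
  apply Finset.filter_congr
  intro i _
  constructor
  · rintro ⟨h, hlt⟩
    refine ⟨h, ?_⟩
    have h1 : x ⟨(i:ℕ)+1, h⟩ = (x ∘ σ) (σ⁻¹ ⟨(i:ℕ)+1, h⟩) := by simp
    have h2 : x i = (x ∘ σ) (σ⁻¹ i) := by simp
    rw [h1, h2] at hlt
    exact hx.lt_iff_lt.mp hlt
  · rintro ⟨h, hlt⟩
    refine ⟨h, ?_⟩
    have h1 : x ⟨(i:ℕ)+1, h⟩ = (x ∘ σ) (σ⁻¹ ⟨(i:ℕ)+1, h⟩) := by simp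
    have h2 : x i = (x ∘ σ) (σ⁻¹ i) := by simp
    rw [h1, h2]
    exact hx hlt

/-- The combinatorial core: the probability that a uniform tuple has `k` descents. -/
lemma pi_desCount_eq (k : ℕ) :
    Measure.pi (fun _ : Fin n => unif) {x | desCount x = k}
      = (eulerian n k : ℝ≥0∞) * ((n.factorial : ℝ≥0∞))⁻¹ := by
  classical
  set P := Measure.pi (fun _ : Fin n => unif) with hP
  have hprob : IsProbabilityMeasure P := by rw [hP]; infer_instance
  have hGoodMeas : MeasurableSet (⋃ σ : Equiv.Perm (Fin n), region σ) :=
    MeasurableSet.iUnion fun σ => measurableSet_region σ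
  have hGood : P (⋃ σ : Equiv.Perm (Fin n), region σ)ᶜ = 0 := by
    have hsub : (⋃ σ : Equiv.Perm (Fin n), region σ)ᶜ ⊆
        ⋃ (i : Fin n) (j : Fin n) (_ : i ≠ j), {x : Fin n → ℝ | x i = x j} := by
      intro x hx
      by_contra hmem
      simp only [Set.mem_iUnion, not_exists, Set.mem_setOf_eq] at hmem
      have hinj : Function.Injective x := by
        intro i j hij
        by_contra hne
        exact hmem i j hne hij
      exact hx (Set.mem_iUnion.mpr ⟨Tuple.sort x, mem_region_sort hinj⟩)
    refine measure_mono_null hsub ?_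
    refine measure_iUnion_null fun i => measure_iUnion_null fun j => ?_
    exact measure_iUnion_null fun hij => pi_eval_eq_eval hij
  have hdisjoint : ∀ (s : Finset (Equiv.Perm (Fin n))),
      P (⋃ σ ∈ s, region σ) = ∑ σ ∈ s, P (region σ) := by
    intro s
    refine measure_biUnion_finset ?_ (fun σ _ => measurableSet_region σ)
    intro σ _ τ _ hστ
    exact region_disjoint hστ
  have hfact0 : (n.factorial : ℝ≥0∞) ≠ 0 := by
    simp [Nat.factorial_ne_zero]
  have hfactt : (n.factorial : ℝ≥0∞) ≠ ⊤ := ENNReal.natCast_ne_top _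
  have hreg : ∀ σ : Equiv.Perm (Fin n), P (region σ) = ((n.factorial : ℝ≥0∞))⁻¹ := by
    have hsumall : ∑ σ : Equiv.Perm (Fin n), P (region σ) = 1 := by
      rw [← hdisjoint Finset.univ]
      have hU : (⋃ σ ∈ (Finset.univ : Finset (Equiv.Perm (Fin n))), region σ)
          = ⋃ σ : Equiv.Perm (Fin n), region σ := by simp
      rw [hU]
      have hc := measure_add_measure_compl (μ := P) hGoodMeas
      rw [hGood, add_zero, measure_univ] at hc
      exact hc
    have hall : ∀ σ, P (region σ) = P (region 1) := fun σ => pi_region_eq σ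
    have hmul : (n.factorial : ℝ≥0∞) * P (region 1) = 1 := by
      rw [← hsumall, Finset.sum_congr rfl fun τ _ => hall τ, Finset.sum_const,
        Finset.card_univ, Fintype.card_perm, Fintype.card_fin, nsmul_eq_mul]
    intro σ
    rw [hall σ]
    calc P (region 1)
        = (n.factorial : ℝ≥0∞)⁻¹ * ((n.factorial : ℝ≥0∞) * P (region 1)) := by
          rw [← mul_assoc, ENNReal.inv_mul_cancel hfact0 hfactt, one_mul]
      _ = (n.factorial : ℝ≥0∞)⁻¹ := by rw [hmul, mul_one]
  -- identify the event with a union of regions, up to null sets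
  set Fs : Finset (Equiv.Perm (Fin n)) :=
    Finset.univ.filter (fun σ : Equiv.Perm (Fin n) => (descentSet σ⁻¹).card = k) with hFs
  have hae : {x : Fin n → ℝ | desCount x = k} =ᵐ[P] ⋃ σ ∈ Fs, region σ := by
    have hGae : ∀ᵐ x ∂P, x ∈ ⋃ σ : Equiv.Perm (Fin n), region σ := by
      have hrfl : {x : Fin n → ℝ | ¬ x ∈ ⋃ σ : Equiv.Perm (Fin n), region σ}
          = (⋃ σ : Equiv.Perm (Fin n), region σ)ᶜ := rfl
      rw [MeasureTheory.ae_iff, hrfl]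
      exact hGood
    rw [Filter.eventuallyEq_set]
    filter_upwards [hGae] with x hxG
    obtain ⟨σ, hσ⟩ := Set.mem_iUnion.mp hxG
    constructor
    · intro hk
      refine Set.mem_iUnion₂.mpr ⟨σ, ?_, hσ⟩
      rw [hFs, Finset.mem_filter]
      refine ⟨Finset.mem_univ _, ?_⟩
      rw [← desCount_eq_of_mem_region hσ]
      exact hk
    · intro hx
      obtain ⟨τ, hτmem, hτ⟩ := Set.mem_iUnion₂.mp hx
      rw [hFs, Finset.mem_filter] at hτmem
      show desCount x = k
      rw [desCount_eq_of_mem_region hτ]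
      exact hτmem.2
  have hcardbij : Fs.card = eulerian n k := by
    rw [hFs]
    unfold eulerian
    refine Finset.card_bij (fun σ _ => σ⁻¹) ?_ ?_ ?_
    · intro σ hσ
      rw [Finset.mem_filter] at hσ ⊢
      exact ⟨Finset.mem_univ _, hσ.2⟩
    · intro σ _ τ _ h
      exact inv_injective h
    · intro τ hτ
      rw [Finset.mem_filter] at hτ
      refine ⟨τ⁻¹, ?_, by simp⟩
      rw [Finset.mem_filter]
      refine ⟨Finset.mem_univ _, by simpa using hτ.2⟩
  rw [measure_congr hae, hdisjoint Fs, Finset.sum_congr rfl fun σ _ => hreg σ,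
    Finset.sum_const, nsmul_eq_mul, hcardbij]

lemma unif_Ioo_compl : unif (Set.Ioo (0:ℝ) 1)ᶜ = 0 := by
  rw [unif, Measure.restrict_apply measurableSet_Ioo.compl]
  have hsub : (Set.Ioo (0:ℝ) 1)ᶜ ∩ Set.Icc 0 1 ⊆ {0, 1} := by
    intro y hy
    obtain ⟨hno, h0, h1⟩ : ¬(0 < y ∧ y < 1) ∧ 0 ≤ y ∧ y ≤ 1 := by
      simpa [Set.mem_Ioo, Set.mem_Icc] using hy
    by_contra h
    simp only [Set.mem_insert_iff, Set.mem_singleton_iff] at h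
    push_neg at h
    exact hno ⟨lt_of_le_of_ne h0 (Ne.symm h.1), lt_of_le_of_ne h1 h.2⟩
  refine measure_mono_null hsub ?_
  have : ({0, 1} : Set ℝ) = {0} ∪ {1} := rfl
  rw [this]
  exact measure_union_null Real.volume_singleton Real.volume_singleton

/-- transfer through the torus -/
lemma pi_floor_eq (k : ℕ) :
    Measure.pi (fun _ : Fin n => unif) {x | ⌊∑ i, x i⌋ = (k : ℤ)}
      = (eulerian n k : ℝ≥0∞) * ((n.factorial : ℝ≥0∞))⁻¹ := by
  classical
  set P := Measure.pi (fun _ : Fin n => unif) with hP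
  set PI := Measure.pi (fun _ : Fin n => unifI) with hPI
  have hPeq : P = PI := by
    rw [hP, hPI]
    congr 1
    funext _
    exact unif_eq_unifI
  have hGnull : P {x : Fin n → ℝ | ¬ ∀ i, x i ∈ Set.Ioo (0:ℝ) 1} = 0 := by
    have hsub : {x : Fin n → ℝ | ¬ ∀ i, x i ∈ Set.Ioo (0:ℝ) 1} ⊆
        ⋃ i, {x : Fin n → ℝ | x i ∈ (Set.Ioo (0:ℝ) 1)ᶜ} := by
      intro x hx
      obtain ⟨i, hi⟩ := not_forall.mp hx
      exact Set.mem_iUnion.mpr ⟨i, hi⟩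
    refine measure_mono_null hsub (measure_iUnion_null fun i => ?_)
    rw [hP, pi_eval_mem]
    exact unif_Ioo_compl
  have hG : ∀ᵐ x ∂P, ∀ i, x i ∈ Set.Ioo (0:ℝ) 1 := by
    rw [MeasureTheory.ae_iff]
    exact hGnull
  set TQ : (Fin n → ℝ) → (Fin n → AddCircle (1:ℝ)) :=
    fun x => psHom (fun i => ((x i : AddCircle (1:ℝ)))) with hTQ
  have hTQmp : MeasurePreserving TQ PI (Measure.pi fun _ => (volume : Measure (AddCircle (1:ℝ)))) :=
    measurePreserving_psHom.comp measurePreserving_mkPi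
  have hDset : MeasurableSet {y : Fin n → AddCircle (1:ℝ) | desCount (fun i => circleRep (y i)) = k} :=
    (measurable_desCount (w := fun (y : Fin n → AddCircle (1:ℝ)) i => circleRep (y i))
      (fun i => measurable_circleRep.comp (measurable_pi_apply i))) (measurableSet_singleton k)
  have hpoint : ∀ x : Fin n → ℝ, (fun i => circleRep (TQ x i)) = fun i => Int.fract (ps x i) := by
    intro x
    funext i
    have h1 : TQ x i = ((ps x i : ℝ) : AddCircle (1:ℝ)) := by
      show psHom (fun j => ((x j : AddCircle (1:ℝ)))) i = _
      rw [psHom_apply, ps, coe_sum_addCircle]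
    rw [h1, circleRep_coe]
  have hstep1 : P {x : Fin n → ℝ | ⌊∑ i, x i⌋ = (k:ℤ)}
      = P {x : Fin n → ℝ | desCount (fun i => Int.fract (ps x i)) = k} := by
    apply measure_congr
    rw [Filter.eventuallyEq_set]
    filter_upwards [hG] with x hx
    rw [floor_sum_eq_desCount x hx]
    exact Nat.cast_inj
  have hstep2 : P {x : Fin n → ℝ | desCount (fun i => Int.fract (ps x i)) = k}
      = (Measure.pi fun _ : Fin n => (volume : Measure (AddCircle (1:ℝ))))
          {y | desCount (fun i => circleRep (y i)) = k} := by
    rw [hPeq, ← hTQmp.measure_preimage hDset.nullMeasurableSet]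
    congr 1
    ext x
    simp only [Set.mem_preimage, Set.mem_setOf_eq, hpoint x]
  have hQmp := measurePreserving_mkPi (n := n)
  have hstep3 : (Measure.pi fun _ : Fin n => (volume : Measure (AddCircle (1:ℝ))))
        {y | desCount (fun i => circleRep (y i)) = k}
      = P {x : Fin n → ℝ | desCount x = k} := by
    rw [← hQmp.measure_preimage hDset.nullMeasurableSet, ← hPI, ← hPeq]
    apply measure_congr
    rw [Filter.eventuallyEq_set]
    filter_upwards [hG] with x hx
    simp only [Set.mem_preimage, Set.mem_setOf_eq]
    have hrep : (fun i => circleRep ((x i : AddCircle (1:ℝ)))) = x := by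
      funext i
      rw [circleRep_coe, Int.fract_eq_self.mpr ⟨le_of_lt (hx i).1, (hx i).2⟩]
    rw [hrep]
  rw [hstep1, hstep2, hstep3, hP, pi_desCount_eq]

end FloorSumAux

end FloorSumAux

theorem floor_sum_uniform_eulerian
    {Ω : Type*} [MeasurableSpace Ω] {μ : Measure Ω} [IsProbabilityMeasure μ]
    (n : ℕ) (U : ℕ → Ω → ℝ) (hmeas : ∀ i, Measurable (U i))
    (hindep : iIndepFun U μ)
    (hunif : ∀ i, μ.map (U i) = volume.restrict (Set.Icc (0 : ℝ) 1))
    (k : ℕ) :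
    μ {ω | ⌊∑ i ∈ Finset.range n, U i ω⌋ = (k : ℤ)} =
      (eulerian n k : ℝ≥0∞) / (Nat.factorial n : ℝ≥0∞) := by
  classical
  set F : Ω → (Fin n → ℝ) := fun ω i => U i ω with hF
  have hFmeas : Measurable F := measurable_pi_lambda _ fun i => hmeas i
  -- joint law is the product of uniforms
  have hmap : Measure.pi (fun _ : Fin n => FloorSumAux.unif) = μ.map F := by
    refine Measure.pi_eq fun s hs => ?_
    rw [Measure.map_apply hFmeas (MeasurableSet.univ_pi hs)]
    set sets : ℕ → Set ℝ := fun i => if h : i < n then s ⟨i, h⟩ else Set.univ with hsets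
    have hsetsm : ∀ i, i ∈ Finset.range n → MeasurableSet (sets i) := by
      intro i _
      by_cases h : i < n
      · simpa [hsets, h] using hs ⟨i, h⟩
      · simp [hsets, h]
    have hpre : F ⁻¹' Set.pi Set.univ s = ⋂ i ∈ Finset.range n, U i ⁻¹' sets i := by
      ext ω
      simp only [Set.mem_preimage, Set.mem_pi, Set.mem_univ, forall_true_left, Set.mem_iInter,
        Finset.mem_range, hF]
      constructor
      · intro h i hi
        simp only [hsets, Set.mem_preimage, dif_pos hi]
        exact h ⟨i, hi⟩
      · intro h i
        have := h i i.isLt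
        simpa only [hsets, Set.mem_preimage, dif_pos i.isLt] using this
    rw [hpre, hindep.measure_inter_preimage_eq_mul _ hsetsm]
    rw [← Fin.prod_univ_eq_prod_range (fun i => μ (U i ⁻¹' sets i)) n]
    refine Finset.prod_congr rfl fun i _ => ?_
    have : sets (i : ℕ) = s i := by simp [hsets, i.isLt]
    rw [this, ← Measure.map_apply (hmeas i) (hs i), hunif i]
    rfl
  have hsum : Measurable fun x : Fin n → ℝ => ∑ i, x i :=
    Finset.measurable_sum _ fun i _ => measurable_pi_apply i
  have hEmeas : MeasurableSet {x : Fin n → ℝ | ⌊∑ i, x i⌋ = (k : ℤ)} :=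
    hsum.floor (measurableSet_singleton (k : ℤ))
  have hset2 : {ω | ⌊∑ i ∈ Finset.range n, U i ω⌋ = (k : ℤ)} =
      F ⁻¹' {x : Fin n → ℝ | ⌊∑ i, x i⌋ = (k : ℤ)} := by
    ext ω
    simp only [Set.mem_setOf_eq, Set.mem_preimage, hF]
    rw [Fin.sum_univ_eq_sum_range (fun i => U i ω) n]
  rw [hset2, ← Measure.map_apply hFmeas hEmeas, ← hmap,
    FloorSumAux.pi_floor_eq k, ENNReal.div_eq_inv_mul, mul_comm]
end

section
/- Let U_1,...,U_n be any real numbers, let S_n be their sum and Ū = S_n/n their mean. Let U_(1) ≤ ... ≤ U_(n) be the sorted values and Δ_i = U_(i+1) − U_(i) for 1 ≤ i ≤ n−1 be the gaps. Define W̌_n = #{i ≤ n : U_i < Ū}. Then for every k with 0 ≤ k ≤ n−1, W̌_n ≤ k if and only if Σ_{j=1}^{k} j·Δ_j − Σ_{j=k+1}^{n−1} (n−j)·Δ_j ≥ 0. -/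
open Finset

private lemma tele_aux (F : ℕ → ℝ) (m : ℕ) :
    ∑ j ∈ Icc 1 m, (F j - F (j - 1)) = F m - F 0 := by
  induction m with
  | zero => simp
  | succ m ih =>
    rw [Finset.sum_Icc_succ_top (Nat.one_le_iff_ne_zero.mpr (Nat.succ_ne_zero m)), ih]
    simp only [Nat.succ_sub_one]
    ring

private lemma icc_range (f : ℕ → ℝ) (n : ℕ) :
    ∑ j ∈ Icc 1 n, f j = ∑ i ∈ range n, f (i + 1) := by
  induction n with
  | zero => simp
  | succ n ih =>
    rw [Finset.sum_Icc_succ_top (by omega), ih, Finset.sum_range_succ]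

private lemma card_filter_coe_lt (n m : ℕ) (h : m ≤ n) :
    (Finset.univ.filter fun i : Fin n => (i : ℕ) < m).card = m := by
  rw [show (Finset.univ.filter fun i : Fin n => (i : ℕ) < m)
      = Finset.attachFin (range m) (fun x hx => lt_of_lt_of_le (mem_range.mp hx) h) from ?_,
    Finset.card_attachFin, card_range]
  ext i; simp

theorem count_below_mean_le_iff
    (n : ℕ) (hn : 1 ≤ n) (U : Fin n → ℝ) (V Δ : ℕ → ℝ)
    -- `V 1 ≤ V 2 ≤ ... ≤ V n` is the increasing rearrangement of `U`:
    (hmono : ∀ i j, 1 ≤ i → i ≤ j → j ≤ n → V i ≤ V j)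
    (hperm : ∃ σ : Equiv.Perm (Fin n), ∀ i : Fin n, V ((i : ℕ) + 1) = U (σ i))
    -- the gaps `Δ_j = V_(j+1) - V_(j)` for `1 ≤ j ≤ n-1`:
    (hΔ : ∀ j, 1 ≤ j → j ≤ n - 1 → Δ j = V (j + 1) - V j)
    (k : ℕ) (hk : k ≤ n - 1) :
    (Finset.univ.filter (fun i : Fin n => U i < (∑ j, U j) / n)).card ≤ k ↔
      0 ≤ ∑ j ∈ Finset.Icc 1 k, (j : ℝ) * Δ j
        - ∑ j ∈ Finset.Icc (k + 1) (n - 1), ((n : ℝ) - j) * Δ j := by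
  obtain ⟨σ, hσ⟩ := hperm
  have hkn : k + 1 ≤ n := by omega
  set S : ℝ := ∑ j, U j with hS
  set m : ℝ := S / n with hm
  -- the sum of V over Icc 1 n equals S
  have hsum : ∑ j ∈ Icc 1 n, V j = S := by
    rw [hS, ← Equiv.sum_comp σ U]
    have : ∑ i : Fin n, U (σ i) = ∑ i : Fin n, V ((i : ℕ) + 1) := by
      exact Finset.sum_congr rfl fun i _ => (hσ i).symm
    rw [this, Fin.sum_univ_eq_sum_range (fun i => V (i + 1)), icc_range]
  -- telescoping identity A
  have hA : ∑ j ∈ Icc 1 k, (j : ℝ) * Δ j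
      = (k : ℝ) * V (k + 1) - ∑ j ∈ Icc 1 k, V j := by
    have h1 : ∑ j ∈ Icc 1 k, (j : ℝ) * Δ j
        = ∑ j ∈ Icc 1 k, (((j : ℝ) * V (j + 1) - ((j - 1 : ℕ) : ℝ) * V ((j - 1) + 1)) - V j) := by
      refine Finset.sum_congr rfl fun j hj => ?_
      obtain ⟨h1j, hjk⟩ := Finset.mem_Icc.mp hj
      rw [hΔ j h1j (le_trans hjk hk)]
      have hc : ((j - 1 : ℕ) : ℝ) = (j : ℝ) - 1 := by
        rw [Nat.cast_sub h1j]; simp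
      rw [show (j - 1) + 1 = j from by omega, hc]
      ring
    rw [h1, Finset.sum_sub_distrib, tele_aux (fun j => (j : ℝ) * V (j + 1)) k]
    simp
  -- telescoping identity for the full B sum up to m ≤ n - 1
  have hB : ∀ p : ℕ, p ≤ n - 1 →
      ∑ j ∈ Icc 1 p, ((n : ℝ) - j) * Δ j
        = ((n : ℝ) - p) * V (p + 1) - (n : ℝ) * V 1 + ∑ j ∈ Icc 1 p, V j := by
    intro p hp
    have h1 : ∑ j ∈ Icc 1 p, ((n : ℝ) - j) * Δ j
        = ∑ j ∈ Icc 1 p, ((((n : ℝ) - j) * V (j + 1) - ((n : ℝ) - ((j - 1 : ℕ) : ℝ)) * V ((j - 1) + 1)) + V j) := by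
      refine Finset.sum_congr rfl fun j hj => ?_
      obtain ⟨h1j, hjp⟩ := Finset.mem_Icc.mp hj
      rw [hΔ j h1j (le_trans hjp hp)]
      have hc : ((j - 1 : ℕ) : ℝ) = (j : ℝ) - 1 := by
        rw [Nat.cast_sub h1j]; simp
      rw [show (j - 1) + 1 = j from by omega, hc]
      ring
    rw [h1, Finset.sum_add_distrib,
      tele_aux (fun j => ((n : ℝ) - j) * V (j + 1)) p]
    push_cast
    ring
  -- the key algebraic identity
  have hkey : ∑ j ∈ Icc 1 k, (j : ℝ) * Δ j
        - ∑ j ∈ Icc (k + 1) (n - 1), ((n : ℝ) - j) * Δ j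
      = (n : ℝ) * V (k + 1) - S := by
    have hsplit : ∑ j ∈ Icc 1 k, ((n : ℝ) - j) * Δ j
        + ∑ j ∈ Icc (k + 1) (n - 1), ((n : ℝ) - j) * Δ j
        = ∑ j ∈ Icc 1 (n - 1), ((n : ℝ) - j) * Δ j := by
      rw [show Icc 1 k = Ioc 0 k from rfl, Finset.Icc_add_one_left_eq_Ioc k (n-1),
        show Icc 1 (n - 1) = Ioc 0 (n - 1) from rfl]
      exact Finset.sum_Ioc_consecutive _ (Nat.zero_le k) hk
    have hsplitV : ∑ j ∈ Icc 1 k, V j + ∑ j ∈ Icc (k + 1) (n - 1), V j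
        = ∑ j ∈ Icc 1 (n - 1), V j := by
      rw [show Icc 1 k = Ioc 0 k from rfl, Finset.Icc_add_one_left_eq_Ioc k (n-1),
        show Icc 1 (n - 1) = Ioc 0 (n - 1) from rfl]
      exact Finset.sum_Ioc_consecutive _ (Nat.zero_le k) hk
    have hBn := hB (n - 1) le_rfl
    have hBk := hB k hk
    have hcast : ((n - 1 : ℕ) : ℝ) = (n : ℝ) - 1 := by
      rw [Nat.cast_sub hn]; simp
    rw [hcast, show (n - 1) + 1 = n from by omega] at hBn
    have hsn : ∑ j ∈ Icc 1 n, V j = ∑ j ∈ Icc 1 (n - 1), V j + V n := by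
      rw [show n = (n - 1) + 1 from by omega, Finset.sum_Icc_succ_top (by omega)]
      simp [show n - 1 + 1 = n from by omega]
    have hB2 : ∑ j ∈ Icc (k + 1) (n - 1), ((n : ℝ) - j) * Δ j
        = (∑ j ∈ Icc 1 (n - 1), ((n : ℝ) - j) * Δ j) - ∑ j ∈ Icc 1 k, ((n : ℝ) - j) * Δ j := by
      linarith [hsplit]
    rw [hA, hB2, hBn, hBk, ← hsum, hsn]
    linarith [hsplitV]
  -- the cardinality equality via the permutation
  have hcard : (Finset.univ.filter (fun i : Fin n => U i < m)).card
      = (Finset.univ.filter (fun i : Fin n => V ((i : ℕ) + 1) < m)).card := by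
    refine (Finset.card_bij (fun i _ => σ i) ?_ ?_ ?_).symm
    · intro i hi
      simp only [mem_filter, mem_univ, true_and] at hi ⊢
      rwa [← hσ i]
    · intro a ha b hb hab
      exact σ.injective hab
    · intro j hj
      refine ⟨σ.symm j, ?_, by simp⟩
      simp only [mem_filter, mem_univ, true_and] at hj ⊢
      rwa [hσ, σ.apply_symm_apply]
  -- the order-statistics characterization
  have horder : (Finset.univ.filter (fun i : Fin n => V ((i : ℕ) + 1) < m)).card ≤ k
      ↔ m ≤ V (k + 1) := by
    constructor
    · intro h
      by_contra hlt
      push_neg at hlt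
      have hsub : (Finset.univ.filter fun i : Fin n => (i : ℕ) < k + 1)
          ⊆ Finset.univ.filter (fun i : Fin n => V ((i : ℕ) + 1) < m) := by
        intro i hi
        simp only [mem_filter, mem_univ, true_and] at hi ⊢
        exact lt_of_le_of_lt (hmono ((i : ℕ) + 1) (k + 1) (by omega) (by omega) hkn) hlt
      have := Finset.card_le_card hsub
      rw [card_filter_coe_lt n (k + 1) hkn] at this
      omega
    · intro h
      have hsub : Finset.univ.filter (fun i : Fin n => V ((i : ℕ) + 1) < m)
          ⊆ Finset.univ.filter fun i : Fin n => (i : ℕ) < k := by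
        intro i hi
        simp only [mem_filter, mem_univ, true_and] at hi ⊢
        by_contra hik
        push_neg at hik
        have : V (k + 1) ≤ V ((i : ℕ) + 1) :=
          hmono (k + 1) ((i : ℕ) + 1) (by omega) (by omega) (by omega)
        linarith
      have := Finset.card_le_card hsub
      rwa [card_filter_coe_lt n k (by omega)] at this
  rw [hcard, hkey, horder, hm]
  rw [div_le_iff₀ (by positivity : (0 : ℝ) < n)]
  constructor <;> intro h <;> nlinarith [h]
end

section
/- Let U_1,...,U_n be any real numbers with sorted values U_(1) ≤ ... ≤ U_(n) and gaps Δ_j = U_(j+1) − U_(j). Define W̌_n = #{i : U_i < mean}. Then W̌_n = min{ k ∈ {0,...,n−1} : Σ_{j=1}^k j·Δ_j ≥ Σ_{j=k+1}^{n−1} (n−j)·Δ_j }. -/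
open Finset

theorem count_below_mean_eq_min
    (n : ℕ) (hn : 1 ≤ n) (U : Fin n → ℝ) (V Δ : ℕ → ℝ)
    -- `V 1 ≤ V 2 ≤ ... ≤ V n` is the increasing rearrangement of `U`:
    (hmono : ∀ i j, 1 ≤ i → i ≤ j → j ≤ n → V i ≤ V j)
    (hperm : ∃ σ : Equiv.Perm (Fin n), ∀ i : Fin n, V ((i : ℕ) + 1) = U (σ i))
    -- the gaps `Δ_j = V_(j+1) - V_(j)` for `1 ≤ j ≤ n-1`:
    (hΔ : ∀ j, 1 ≤ j → j ≤ n - 1 → Δ j = V (j + 1) - V j) :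
    ((Finset.univ.filter (fun i : Fin n => U i < (∑ j, U j) / n)).card : ℕ) =
      sInf {k : ℕ | k ≤ n - 1 ∧
        ∑ j ∈ Finset.Icc (k + 1) (n - 1), ((n : ℝ) - j) * Δ j
          ≤ ∑ j ∈ Finset.Icc 1 k, (j : ℝ) * Δ j} := by
  obtain ⟨σ, hσ⟩ := hperm
  set m : ℝ := (∑ j, U j) / n with hm
  have hnR : (0:ℝ) < n := by exact_mod_cast hn
  -- sum of U equals sum of V over Icc 1 n
  have hUsum : ∑ j, U j = ∑ j ∈ Icc 1 n, V j := by
    rw [← Equiv.sum_comp σ U]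
    have h1 : ∑ i : Fin n, U (σ i) = ∑ i : Fin n, V ((i : ℕ) + 1) := by
      exact Finset.sum_congr rfl (fun i _ => (hσ i).symm)
    rw [h1, Fin.sum_univ_eq_sum_range (fun i => V (i + 1))]
    rw [show Icc 1 n = Ico 1 (n+1) by rw [Finset.Ico_add_one_right_eq_Icc]]
    rw [Finset.sum_Ico_eq_sum_range]
    simp [add_comm]
  -- Abel summation lemma A
  have lemA : ∀ k, k ≤ n - 1 →
      ∑ j ∈ Icc 1 k, (j:ℝ) * Δ j = k * V (k+1) - ∑ j ∈ Icc 1 k, V j := by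
    intro k
    induction k with
    | zero => intro _; simp
    | succ k ih =>
      intro hk
      rw [Finset.sum_Icc_succ_top (by omega), Finset.sum_Icc_succ_top (by omega),
        ih (by omega), hΔ (k+1) (by omega) hk]
      push_cast; ring
  -- Abel summation lemma B (downward induction)
  have lemB : ∀ d k, k + d = n - 1 →
      ∑ j ∈ Icc (k+1) (n-1), ((n:ℝ) - j) * Δ j
        = (∑ j ∈ Icc (k+1) n, V j) - ((n:ℝ) - k) * V (k+1) := by
    intro d
    induction d with
    | zero =>
      intro k hk
      have hk' : k = n - 1 := by omega
      subst hk'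
      have h1 : Icc (n - 1 + 1) (n-1) = (∅ : Finset ℕ) := by
        rw [Finset.Icc_eq_empty_iff]; omega
      have h2 : n - 1 + 1 = n := by omega
      rw [h1, h2, Finset.Icc_self, Finset.sum_singleton, Finset.sum_empty]
      have : ((n:ℝ) - (n - 1 : ℕ)) = 1 := by
        have : ((n - 1 : ℕ) : ℝ) = (n:ℝ) - 1 := by
          push_cast [Nat.cast_sub hn]; ring
        rw [this]; ring
      rw [this]; ring
    | succ d ih =>
      intro k hk
      have hins : Icc (k+1) (n-1) = insert (k+1) (Icc (k+2) (n-1)) := by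
        ext x; simp only [Finset.mem_Icc, Finset.mem_insert]; omega
      have hins2 : Icc (k+1) n = insert (k+1) (Icc (k+2) n) := by
        ext x; simp only [Finset.mem_Icc, Finset.mem_insert]; omega
      have hnot : (k+1) ∉ Icc (k+2) (n-1) := by simp
      have hnot2 : (k+1) ∉ Icc (k+2) n := by simp
      rw [hins, hins2, Finset.sum_insert hnot, Finset.sum_insert hnot2,
        ih (k+1) (by omega), hΔ (k+1) (by omega) (by omega)]
      push_cast; ring
  -- splitting the sum of V
  have hsplit : ∀ k, k ≤ n →
      (∑ j ∈ Icc 1 k, V j) + (∑ j ∈ Icc (k+1) n, V j) = ∑ j ∈ Icc 1 n, V j := by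
    intro k hk
    have := Finset.sum_Ioc_consecutive V (Nat.zero_le k) hk
    simpa only [← Finset.Icc_add_one_left_eq_Ioc, zero_add] using this
  -- the key equivalence
  have hkey : ∀ k, k ≤ n - 1 →
      ((∑ j ∈ Icc (k+1) (n-1), ((n:ℝ) - j) * Δ j ≤ ∑ j ∈ Icc 1 k, (j:ℝ) * Δ j)
        ↔ m ≤ V (k+1)) := by
    intro k hk
    rw [lemA k hk, lemB (n - 1 - k) k (by omega)]
    have hs := hsplit k (by omega)
    rw [hm, hUsum, div_le_iff₀ hnR]
    constructor
    · intro h; nlinarith [hs]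
    · intro h; nlinarith [hs]
  -- define W
  set F : Finset ℕ := (Icc 1 n).filter (fun j => V j < m) with hF
  set W : ℕ := F.card with hW
  -- F is downward closed
  have hup : ∀ j ∈ F, j ≤ W := by
    intro j hj
    have hjm := Finset.mem_filter.mp hj
    have hjIcc := Finset.mem_Icc.mp hjm.1
    have hsub : Icc 1 j ⊆ F := by
      intro i hi
      have hiIcc := Finset.mem_Icc.mp hi
      refine Finset.mem_filter.mpr ⟨Finset.mem_Icc.mpr ⟨hiIcc.1, le_trans hiIcc.2 hjIcc.2⟩, ?_⟩
      exact lt_of_le_of_lt (hmono i j hiIcc.1 hiIcc.2 hjIcc.2) hjm.2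
    have := Finset.card_le_card hsub
    simpa [Nat.card_Icc] using this
  have hdown : ∀ j, 1 ≤ j → j ≤ W → j ∈ F := by
    intro j hj1 hjW
    by_contra hjF
    have hWn : W ≤ n := by
      have : F ⊆ Icc 1 n := Finset.filter_subset _ _
      have := Finset.card_le_card this
      simpa [Nat.card_Icc] using this
    have hsub : F ⊆ Icc 1 (j-1) := by
      intro i hi
      have him := Finset.mem_filter.mp hi
      have hiIcc := Finset.mem_Icc.mp him.1
      refine Finset.mem_Icc.mpr ⟨hiIcc.1, ?_⟩
      by_contra hij
      have hji : j ≤ i := by omega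
      have : j ∈ F := Finset.mem_filter.mpr
        ⟨Finset.mem_Icc.mpr ⟨hj1, by omega⟩,
          lt_of_le_of_lt (hmono j i hj1 hji hiIcc.2) him.2⟩
      exact hjF this
    have := Finset.card_le_card hsub
    rw [Nat.card_Icc] at this
    omega
  -- V n ≥ m
  have hVn : m ≤ V n := by
    rw [hm, hUsum, div_le_iff₀ hnR]
    have : ∑ j ∈ Icc 1 n, V j ≤ ∑ j ∈ Icc 1 n, V n := by
      apply Finset.sum_le_sum
      intro j hj
      have hjIcc := Finset.mem_Icc.mp hj
      exact hmono j n hjIcc.1 hjIcc.2 le_rfl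
    calc ∑ j ∈ Icc 1 n, V j ≤ ∑ j ∈ Icc 1 n, V n := this
      _ = n * V n := by rw [Finset.sum_const, Nat.card_Icc]; simp [mul_comm]
      _ = V n * n := by ring
  have hWle : W ≤ n - 1 := by
    have hnF : n ∉ F := by
      intro h
      exact absurd (Finset.mem_filter.mp h).2 (not_lt.mpr hVn)
    have hsub : F ⊆ (Icc 1 n).erase n := by
      intro i hi
      refine Finset.mem_erase.mpr ⟨?_, (Finset.mem_filter.mp hi).1⟩
      intro h; exact hnF (h ▸ hi)
    have := Finset.card_le_card hsub
    rw [Finset.card_erase_of_mem (Finset.mem_Icc.mpr ⟨hn, le_rfl⟩), Nat.card_Icc] at this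
    omega
  have hVW1 : m ≤ V (W + 1) := by
    by_contra h
    push_neg at h
    have : W + 1 ∈ F := Finset.mem_filter.mpr
      ⟨Finset.mem_Icc.mpr ⟨by omega, by omega⟩, h⟩
    have := hup _ this
    omega
  -- rewrite the set
  have hset : {k : ℕ | k ≤ n - 1 ∧
      ∑ j ∈ Finset.Icc (k + 1) (n - 1), ((n : ℝ) - j) * Δ j
        ≤ ∑ j ∈ Finset.Icc 1 k, (j : ℝ) * Δ j}
      = {k : ℕ | k ≤ n - 1 ∧ m ≤ V (k+1)} := by
    ext k
    simp only [Set.mem_setOf_eq]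
    constructor
    · rintro ⟨h1, h2⟩; exact ⟨h1, (hkey k h1).mp h2⟩
    · rintro ⟨h1, h2⟩; exact ⟨h1, (hkey k h1).mpr h2⟩
  rw [hset]
  -- sInf = W
  have hWmem : W ∈ {k : ℕ | k ≤ n - 1 ∧ m ≤ V (k+1)} := ⟨hWle, hVW1⟩
  have hsInf : sInf {k : ℕ | k ≤ n - 1 ∧ m ≤ V (k+1)} = W := by
    apply le_antisymm (Nat.sInf_le hWmem)
    by_contra h
    push_neg at h
    have hne : {k : ℕ | k ≤ n - 1 ∧ m ≤ V (k+1)}.Nonempty := ⟨W, hWmem⟩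
    have hmem := Nat.sInf_mem hne
    set k := sInf {k : ℕ | k ≤ n - 1 ∧ m ≤ V (k+1)}
    have hk1 : k + 1 ∈ F := hdown (k+1) (by omega) (by omega)
    have := (Finset.mem_filter.mp hk1).2
    exact absurd hmem.2 (not_le.mpr this)
  rw [hsInf]
  -- count equality: card of filter on U equals W
  have hcard : (Finset.univ.filter (fun i : Fin n => U i < m)).card = W := by
    calc (Finset.univ.filter (fun i : Fin n => U i < m)).card
        = ∑ i : Fin n, if U i < m then 1 else 0 := Finset.card_filter _ _
      _ = ∑ i : Fin n, if U (σ i) < m then 1 else 0 := (Equiv.sum_comp σ _).symm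
      _ = ∑ i : Fin n, if V ((i:ℕ)+1) < m then 1 else 0 := by
          refine Finset.sum_congr rfl fun i _ => by rw [hσ]
      _ = ∑ i ∈ range n, if V (i+1) < m then 1 else 0 :=
          Fin.sum_univ_eq_sum_range (fun i => if V (i+1) < m then 1 else 0) n
      _ = ∑ j ∈ Icc 1 n, if V j < m then 1 else 0 := by
          rw [show Icc 1 n = Ico 1 (n+1) from (Finset.Ico_add_one_right_eq_Icc 1 n).symm,
            Finset.sum_Ico_eq_sum_range]
          simp [add_comm]
      _ = W := (Finset.card_filter _ _).symm
  exact hcard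
end

section
/- The function F(x) = (2/π) arctan( (x/(1−x))^{3/2} ) for 0 ≤ x ≤ 1 is a cumulative distribution function whose density is f(x) = (3/π) · √(x(1−x)) / (x³ + (1−x)³) on (0,1); i.e., F'(x) = f(x) for 0 < x < 1 and ∫_0^1 f(x) dx = 1. -/
open Real Filter Set MeasureTheory Topology

lemma aux_denom_pos (x : ℝ) : 0 < x ^ 3 + (1 - x) ^ 3 := by
  nlinarith [sq_nonneg (2*x - 1), sq_nonneg x, sq_nonneg (1-x)]

lemma aux_deriv (x : ℝ) (hx0 : 0 < x) (hx1 : x < 1) :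
    HasDerivAt (fun y : ℝ => (2 / Real.pi) * Real.arctan ((y / (1 - y)) ^ ((3 : ℝ) / 2)))
      ((3 / Real.pi) * (Real.sqrt (x * (1 - x)) / (x ^ 3 + (1 - x) ^ 3))) x := by
  have h1 : (0:ℝ) < 1 - x := by linarith
  set u : ℝ := x / (1 - x) with hu
  have hu0 : 0 < u := div_pos hx0 h1
  have hg : HasDerivAt (fun y : ℝ => y / (1 - y)) (1 / (1-x)^2) x := by
    have := (hasDerivAt_id x).div ((hasDerivAt_id x).const_sub 1) (ne_of_gt h1)
    refine this.congr_deriv ?_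
    simp only [id]
    ring
  have hpow : HasDerivAt (fun y : ℝ => (y / (1-y)) ^ ((3:ℝ)/2))
      ((((3:ℝ)/2) * u ^ ((3:ℝ)/2 - 1)) * (1/(1-x)^2)) x := by
    have := (Real.hasDerivAt_rpow_const (p := (3:ℝ)/2) (Or.inl hu0.ne')).comp x hg
    exact this
  have harc := (Real.hasDerivAt_arctan (u ^ ((3:ℝ)/2))).comp x hpow
  have hfin := harc.const_mul (2 / Real.pi)
  refine hfin.congr_deriv ?_
  have h2 : ((u ^ ((3:ℝ)/2)) ^ 2 : ℝ) = u ^ 3 := by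
    rw [← Real.rpow_natCast (u ^ ((3:ℝ)/2)) 2, ← Real.rpow_mul hu0.le,
      ← Real.rpow_natCast u 3]
    norm_num
  have h3 : u ^ ((3:ℝ)/2 - 1) = Real.sqrt u := by
    rw [Real.sqrt_eq_rpow]; norm_num
  have h4 : Real.sqrt u = Real.sqrt x / Real.sqrt (1-x) := by
    rw [hu, Real.sqrt_div hx0.le]
  have h5 : Real.sqrt (x * (1-x)) = Real.sqrt x * Real.sqrt (1-x) :=
    Real.sqrt_mul hx0.le _
  have h6 : Real.sqrt (1-x) * Real.sqrt (1-x) = 1 - x := Real.mul_self_sqrt h1.le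
  have hden : x ^ 3 + (1-x) ^ 3 ≠ 0 := (aux_denom_pos x).ne'
  have hsq : Real.sqrt (1-x) ≠ 0 := (Real.sqrt_pos.2 h1).ne'
  have h7 : Real.sqrt x / Real.sqrt (1-x) = Real.sqrt x * Real.sqrt (1-x) / (1-x) := by
    rw [div_eq_div_iff hsq h1.ne', mul_assoc, h6]
  rw [h2, h3, h4, h7, h5, hu]
  have hnz : (1 : ℝ) + (x / (1-x)) ^ 3 ≠ 0 := by
    have : (1:ℝ) + (x/(1-x))^3 = (x^3 + (1-x)^3)/(1-x)^3 := by field_simp; ring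
    rw [this]
    positivity
  field_simp
  ring

theorem limiting_distribution_density :
    (∀ x : ℝ, 0 < x → x < 1 →
      HasDerivAt (fun y : ℝ => (2 / Real.pi) * Real.arctan ((y / (1 - y)) ^ ((3 : ℝ) / 2)))
        ((3 / Real.pi) * (Real.sqrt (x * (1 - x)) / (x ^ 3 + (1 - x) ^ 3))) x) ∧
    (∫ x in (0 : ℝ)..1,
        (3 / Real.pi) * (Real.sqrt (x * (1 - x)) / (x ^ 3 + (1 - x) ^ 3))) = 1 := by
  have hcont : Continuous fun x : ℝ =>
      (3 / Real.pi) * (Real.sqrt (x * (1 - x)) / (x ^ 3 + (1 - x) ^ 3)) := by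
    apply Continuous.mul continuous_const
    apply Continuous.div (Real.continuous_sqrt.comp (by continuity)) (by continuity)
    exact fun x => (aux_denom_pos x).ne'
  refine ⟨fun x hx0 hx1 => aux_deriv x hx0 hx1, ?_⟩
  have h0 : Tendsto (fun y : ℝ => (2 / Real.pi) * Real.arctan ((y / (1 - y)) ^ ((3 : ℝ) / 2)))
      (𝓝[>] (0:ℝ)) (𝓝 0) := by
    have hc : ContinuousAt (fun y : ℝ =>
        (2 / Real.pi) * Real.arctan ((y / (1 - y)) ^ ((3 : ℝ) / 2))) 0 := by
      apply ContinuousAt.mul continuousAt_const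
      apply Real.continuous_arctan.continuousAt.comp
      apply ContinuousAt.rpow_const
      · exact continuousAt_id.div (continuousAt_const.sub continuousAt_id) (by norm_num)
      · right; norm_num
    have := hc.tendsto.mono_left (nhdsWithin_le_nhds (s := Set.Ioi (0:ℝ)))
    simpa [Real.zero_rpow (by norm_num : (3:ℝ)/2 ≠ 0)] using this
  have h1 : Tendsto (fun y : ℝ => (2 / Real.pi) * Real.arctan ((y / (1 - y)) ^ ((3 : ℝ) / 2)))
      (𝓝[<] (1:ℝ)) (𝓝 1) := by
    have t1 : Tendsto (fun y : ℝ => 1 - y) (𝓝[<] (1:ℝ)) (𝓝[>] (0:ℝ)) := by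
      apply tendsto_nhdsWithin_of_tendsto_nhds_of_eventually_within
      · have : Tendsto (fun y : ℝ => 1 - y) (𝓝 (1:ℝ)) (𝓝 0) := by
          have h := ((continuous_const (y := (1:ℝ))).sub continuous_id).tendsto (1:ℝ)
          simpa [Pi.sub_def] using h
        exact this.mono_left (nhdsWithin_le_nhds (s := Set.Iio (1:ℝ)))
      · filter_upwards [self_mem_nhdsWithin] with y hy
        simp only [Set.mem_Iio] at hy
        simp only [Set.mem_Ioi]
        linarith
    have t2 : Tendsto (fun y : ℝ => (1 - y)⁻¹) (𝓝[<] (1:ℝ)) atTop :=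
      tendsto_inv_nhdsGT_zero.comp t1
    have t3 : Tendsto (fun y : ℝ => y / (1 - y)) (𝓝[<] (1:ℝ)) atTop := by
      have tnum : Tendsto (fun y : ℝ => y) (𝓝[<] (1:ℝ)) (𝓝 1) :=
        tendsto_id.mono_left (nhdsWithin_le_nhds (s := Set.Iio (1:ℝ)))
      simpa [div_eq_mul_inv] using tnum.pos_mul_atTop one_pos t2
    have t4 : Tendsto (fun y : ℝ => (y / (1 - y)) ^ ((3:ℝ)/2)) (𝓝[<] (1:ℝ)) atTop :=
      (tendsto_rpow_atTop (by norm_num : (0:ℝ) < 3/2)).comp t3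
    have t5 : Tendsto (fun y : ℝ => Real.arctan ((y / (1 - y)) ^ ((3:ℝ)/2))) (𝓝[<] (1:ℝ))
        (𝓝 (Real.pi/2)) :=
      (Real.tendsto_arctan_atTop.mono_right nhdsWithin_le_nhds).comp t4
    have hfin := t5.const_mul (2 / Real.pi)
    have hval : (2 / Real.pi) * (Real.pi / 2) = 1 := by
      field_simp
    rw [hval] at hfin
    exact hfin
  have key := intervalIntegral.integral_eq_sub_of_hasDerivAt_of_tendsto
    (f := fun y : ℝ => (2 / Real.pi) * Real.arctan ((y / (1 - y)) ^ ((3 : ℝ) / 2)))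
    one_pos (fun x hx => aux_deriv x hx.1 hx.2) (hcont.intervalIntegrable 0 1) h0 h1
  rw [key]
  norm_num
end
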